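/- For a plane curve of odd degree d defined by irreducible homogeneous f, the homogeneous ideal of its image under the Veronese embedding is generated by the six quadrics Δ_{ij} together with the three forms F₀, F₁, F₂ of degree (d+1)/2 satisfying θ(Fₙ) = xₙ·f; that is, if G ∈ S is homogeneous with θ(G) ∈ (f), then G ∈ (F₀, F₁, F₂, Δ₀₀, Δ₀₁, Δ₀₂, Δ₁₁, Δ₁₂, Δ₂₂). -/

import Mathlib

open MvPolynomial

noncomputable def theta (k : Type*) [CommRing k] :
    MvPolynomial (Fin 6) k →ₐ[k] MvPolynomial (Fin 3) k :=
  MvPolynomial.aeval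
    ![X 0 * X 0, X 0 * X 1, X 0 * X 2, X 1 * X 1, X 1 * X 2, X 2 * X 2]

noncomputable def Delta (k : Type*) [CommRing k] : Fin 6 → MvPolynomial (Fin 6) k :=
  ![X 3 * X 5 - X 4 * X 4,
    X 1 * X 5 - X 4 * X 2,
    X 1 * X 4 - X 2 * X 3,
    X 0 * X 5 - X 2 * X 2,
    X 0 * X 4 - X 2 * X 1,
    X 0 * X 3 - X 1 * X 1]

namespace VAux
open Finsupp

/-! ### Exponent bookkeeping -/

noncomputable def tt (e : Fin 6 →₀ ℕ) : Fin 3 →₀ ℕ :=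
  Finsupp.equivFunOnFinite.symm
    ![2*e 0 + e 1 + e 2, e 1 + 2*e 3 + e 4, e 2 + e 4 + 2*e 5]

@[simp] lemma tt0 (e : Fin 6 →₀ ℕ) : tt e 0 = 2*e 0 + e 1 + e 2 := rfl
@[simp] lemma tt1 (e : Fin 6 →₀ ℕ) : tt e 1 = e 1 + 2*e 3 + e 4 := rfl
@[simp] lemma tt2 (e : Fin 6 →₀ ℕ) : tt e 2 = e 2 + e 4 + 2*e 5 := rfl

noncomputable def gg (v : Fin 3 →₀ ℕ) : Fin 6 →₀ ℕ :=
  Finsupp.equivFunOnFinite.symm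
    ![v 0 / 2, if v 0 % 2 = 1 ∧ v 1 % 2 = 1 then 1 else 0,
      if v 0 % 2 = 1 ∧ v 1 % 2 = 0 then 1 else 0, v 1 / 2,
      if v 0 % 2 = 0 ∧ v 1 % 2 = 1 then 1 else 0, v 2 / 2]

@[simp] lemma gg0 (v : Fin 3 →₀ ℕ) : gg v 0 = v 0 / 2 := rfl
@[simp] lemma gg1 (v : Fin 3 →₀ ℕ) : gg v 1 = if v 0 % 2 = 1 ∧ v 1 % 2 = 1 then 1 else 0 := rfl
@[simp] lemma gg2 (v : Fin 3 →₀ ℕ) : gg v 2 = if v 0 % 2 = 1 ∧ v 1 % 2 = 0 then 1 else 0 := rfl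
@[simp] lemma gg3 (v : Fin 3 →₀ ℕ) : gg v 3 = v 1 / 2 := rfl
@[simp] lemma gg4 (v : Fin 3 →₀ ℕ) : gg v 4 = if v 0 % 2 = 0 ∧ v 1 % 2 = 1 then 1 else 0 := rfl
@[simp] lemma gg5 (v : Fin 3 →₀ ℕ) : gg v 5 = v 2 / 2 := rfl

lemma tt_gg (v : Fin 3 →₀ ℕ) (h : Even (v 0 + v 1 + v 2)) : tt (gg v) = v := by
  rw [Nat.even_iff] at h
  ext i
  fin_cases i <;> simp <;> split_ifs <;> omega

lemma gg_tt (e : Fin 6 →₀ ℕ) (h : e 1 + e 2 + e 4 ≤ 1) : gg (tt e) = e := by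
  ext i
  fin_cases i <;> simp <;> (try split_ifs) <;> grind

lemma tt_add (a b : Fin 6 →₀ ℕ) : tt (a + b) = tt a + tt b := by
  ext i
  fin_cases i <;> simp [Finsupp.add_apply] <;> ring

variable {k : Type*} [CommRing k]

lemma theta_monomial (e : Fin 6 →₀ ℕ) (r : k) :
    theta k (monomial e r) = monomial (tt e) r := by
  have h0 : (![X 0 * X 0, X 0 * X 1, X 0 * X 2, X 1 * X 1, X 1 * X 2, X 2 * X 2] :
      Fin 6 → MvPolynomial (Fin 3) k) 0 = X 0 * X 0 := rfl
  have h1 : (![X 0 * X 0, X 0 * X 1, X 0 * X 2, X 1 * X 1, X 1 * X 2, X 2 * X 2] :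
      Fin 6 → MvPolynomial (Fin 3) k) 1 = X 0 * X 1 := rfl
  have h2 : (![X 0 * X 0, X 0 * X 1, X 0 * X 2, X 1 * X 1, X 1 * X 2, X 2 * X 2] :
      Fin 6 → MvPolynomial (Fin 3) k) 2 = X 0 * X 2 := rfl
  have h3 : (![X 0 * X 0, X 0 * X 1, X 0 * X 2, X 1 * X 1, X 1 * X 2, X 2 * X 2] :
      Fin 6 → MvPolynomial (Fin 3) k) 3 = X 1 * X 1 := rfl
  have h4 : (![X 0 * X 0, X 0 * X 1, X 0 * X 2, X 1 * X 1, X 1 * X 2, X 2 * X 2] :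
      Fin 6 → MvPolynomial (Fin 3) k) 4 = X 1 * X 2 := rfl
  have h5 : (![X 0 * X 0, X 0 * X 1, X 0 * X 2, X 1 * X 1, X 1 * X 2, X 2 * X 2] :
      Fin 6 → MvPolynomial (Fin 3) k) 5 = X 2 * X 2 := rfl
  rw [theta, aeval_monomial, monomial_eq]
  rw [Finsupp.prod_fintype _ _ (fun i => pow_zero _),
      Finsupp.prod_fintype _ _ (fun i => pow_zero _)]
  rw [Fin.prod_univ_six, Fin.prod_univ_three]
  rw [h0, h1, h2, h3, h4, h5, tt0, tt1, tt2]
  rw [algebraMap_eq]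
  ring

/-! ### The ideal of the minors -/

lemma mXX (i j : Fin 6) :
    (monomial (Finsupp.single i 1 + Finsupp.single j 1) (1:k)) = X i * X j := by
  rw [X, X, monomial_mul, one_mul]

lemma mX2 (i : Fin 6) : (monomial (Finsupp.single i 2) (1:k)) = X i * X i := by
  rw [X, monomial_mul, one_mul, ← Finsupp.single_add]

lemma delta_mem (j : Fin 6) : Delta k j ∈ Ideal.span (Set.range (Delta k)) :=
  Ideal.subset_span ⟨j, rfl⟩

lemma pair1 : (monomial (Finsupp.single 1 2) 1 : MvPolynomial (Fin 6) k)
    - monomial (Finsupp.single 0 1 + Finsupp.single 3 1) 1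
    ∈ Ideal.span (Set.range (Delta k)) := by
  have hd : Delta k 5 = X 0 * X 3 - X 1 * X 1 := rfl
  have : (monomial (Finsupp.single 1 2) (1:k))
      - monomial (Finsupp.single 0 1 + Finsupp.single 3 1) 1 = -Delta k 5 := by
    rw [hd, mX2, mXX]; ring
  rw [this]; exact neg_mem (delta_mem 5)

lemma pair2 : (monomial (Finsupp.single 2 2) 1 : MvPolynomial (Fin 6) k)
    - monomial (Finsupp.single 0 1 + Finsupp.single 5 1) 1
    ∈ Ideal.span (Set.range (Delta k)) := by
  have hd : Delta k 3 = X 0 * X 5 - X 2 * X 2 := rfl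
  have : (monomial (Finsupp.single 2 2) (1:k))
      - monomial (Finsupp.single 0 1 + Finsupp.single 5 1) 1 = -Delta k 3 := by
    rw [hd, mX2, mXX]; ring
  rw [this]; exact neg_mem (delta_mem 3)

lemma pair3 : (monomial (Finsupp.single 4 2) 1 : MvPolynomial (Fin 6) k)
    - monomial (Finsupp.single 3 1 + Finsupp.single 5 1) 1
    ∈ Ideal.span (Set.range (Delta k)) := by
  have hd : Delta k 0 = X 3 * X 5 - X 4 * X 4 := rfl
  have : (monomial (Finsupp.single 4 2) (1:k))
      - monomial (Finsupp.single 3 1 + Finsupp.single 5 1) 1 = -Delta k 0 := by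
    rw [hd, mX2, mXX]; ring
  rw [this]; exact neg_mem (delta_mem 0)

lemma pair4 : (monomial (Finsupp.single 1 1 + Finsupp.single 2 1) 1 : MvPolynomial (Fin 6) k)
    - monomial (Finsupp.single 0 1 + Finsupp.single 4 1) 1
    ∈ Ideal.span (Set.range (Delta k)) := by
  have hd : Delta k 4 = X 0 * X 4 - X 2 * X 1 := rfl
  have : (monomial (Finsupp.single 1 1 + Finsupp.single 2 1) (1:k))
      - monomial (Finsupp.single 0 1 + Finsupp.single 4 1) 1 = -Delta k 4 := by
    rw [hd, mXX, mXX]; ring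
  rw [this]; exact neg_mem (delta_mem 4)

lemma pair5 : (monomial (Finsupp.single 1 1 + Finsupp.single 4 1) 1 : MvPolynomial (Fin 6) k)
    - monomial (Finsupp.single 2 1 + Finsupp.single 3 1) 1
    ∈ Ideal.span (Set.range (Delta k)) := by
  have hd : Delta k 2 = X 1 * X 4 - X 2 * X 3 := rfl
  have : (monomial (Finsupp.single 1 1 + Finsupp.single 4 1) (1:k))
      - monomial (Finsupp.single 2 1 + Finsupp.single 3 1) 1 = Delta k 2 := by
    rw [hd, mXX, mXX]
  rw [this]; exact delta_mem 2

lemma pair6 : (monomial (Finsupp.single 2 1 + Finsupp.single 4 1) 1 : MvPolynomial (Fin 6) k)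
    - monomial (Finsupp.single 1 1 + Finsupp.single 5 1) 1
    ∈ Ideal.span (Set.range (Delta k)) := by
  have hd : Delta k 1 = X 1 * X 5 - X 4 * X 2 := rfl
  have : (monomial (Finsupp.single 2 1 + Finsupp.single 4 1) (1:k))
      - monomial (Finsupp.single 1 1 + Finsupp.single 5 1) 1 = -Delta k 1 := by
    rw [hd, mXX, mXX]; ring
  rw [this]; exact neg_mem (delta_mem 1)

lemma reduce (e p q : Fin 6 →₀ ℕ) (hpe : p ≤ e)
    (hpq : (monomial p 1 : MvPolynomial (Fin 6) k) - monomial q 1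
      ∈ Ideal.span (Set.range (Delta k)))
    (htpq : tt p = tt q)
    (ihred : (monomial (e - p + q) 1 : MvPolynomial (Fin 6) k)
      - monomial (gg (tt (e - p + q))) 1 ∈ Ideal.span (Set.range (Delta k))) :
    (monomial e 1 : MvPolynomial (Fin 6) k) - monomial (gg (tt e)) 1
      ∈ Ideal.span (Set.range (Delta k)) := by
  have he : e - p + p = e := tsub_add_cancel_of_le hpe
  have htt : tt (e - p + q) = tt e := by
    rw [tt_add, ← htpq, ← tt_add, he]
  have h2 : (monomial e 1 : MvPolynomial (Fin 6) k) - monomial (e - p + q) 1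
      ∈ Ideal.span (Set.range (Delta k)) := by
    have heq : (monomial e 1 : MvPolynomial (Fin 6) k) - monomial (e - p + q) 1
        = monomial (e - p) 1 * ((monomial p 1) - monomial q 1) := by
      rw [mul_sub, monomial_mul, monomial_mul, one_mul, he]
    rw [heq]; exact Ideal.mul_mem_left _ _ hpq
  have h3 := Ideal.add_mem _ h2 (htt ▸ ihred)
  rw [sub_add_sub_cancel] at h3
  exact h3

lemma key : ∀ (N : ℕ) (e : Fin 6 →₀ ℕ), e 1 + e 2 + e 4 ≤ N →
    (monomial e 1 : MvPolynomial (Fin 6) k) - monomial (gg (tt e)) 1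
      ∈ Ideal.span (Set.range (Delta k)) := by
  intro N
  induction N with
  | zero =>
    intro e he
    rw [gg_tt e (by omega)]
    simp
  | succ n ih =>
    intro e he
    by_cases hbase : e 1 + e 2 + e 4 ≤ 1
    · rw [gg_tt e hbase]; simp
    · by_cases c1 : 2 ≤ e 1
      · refine reduce e (Finsupp.single 1 2) (Finsupp.single 0 1 + Finsupp.single 3 1)
          (Finsupp.single_le_iff.mpr c1) pair1 ?_ (ih _ ?_)
        · ext i; fin_cases i <;>
            simp [Finsupp.add_apply, Finsupp.single_apply]
        · simp [Finsupp.add_apply, Finsupp.tsub_apply, Finsupp.single_apply]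
          omega
      · by_cases c2 : 2 ≤ e 2
        · refine reduce e (Finsupp.single 2 2) (Finsupp.single 0 1 + Finsupp.single 5 1)
            (Finsupp.single_le_iff.mpr c2) pair2 ?_ (ih _ ?_)
          · ext i; fin_cases i <;>
              simp [Finsupp.add_apply, Finsupp.single_apply]
          · simp [Finsupp.add_apply, Finsupp.tsub_apply, Finsupp.single_apply]
            omega
        · by_cases c4 : 2 ≤ e 4
          · refine reduce e (Finsupp.single 4 2) (Finsupp.single 3 1 + Finsupp.single 5 1)
              (Finsupp.single_le_iff.mpr c4) pair3 ?_ (ih _ ?_)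
            · ext i; fin_cases i <;>
                simp [Finsupp.add_apply, Finsupp.single_apply]
            · simp [Finsupp.add_apply, Finsupp.tsub_apply, Finsupp.single_apply]
              omega
          · by_cases c12 : 1 ≤ e 1 ∧ 1 ≤ e 2
            · refine reduce e (Finsupp.single 1 1 + Finsupp.single 2 1)
                (Finsupp.single 0 1 + Finsupp.single 4 1) ?_ pair4 ?_ (ih _ ?_)
              · intro i
                fin_cases i <;> simp [Finsupp.add_apply, Finsupp.single_apply] <;> omega
              · ext i; fin_cases i <;>
                  simp [Finsupp.add_apply, Finsupp.single_apply]
              · simp [Finsupp.add_apply, Finsupp.tsub_apply, Finsupp.single_apply]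
                omega
            · by_cases c14 : 1 ≤ e 1 ∧ 1 ≤ e 4
              · refine reduce e (Finsupp.single 1 1 + Finsupp.single 4 1)
                  (Finsupp.single 2 1 + Finsupp.single 3 1) ?_ pair5 ?_ (ih _ ?_)
                · intro i
                  fin_cases i <;> simp [Finsupp.add_apply, Finsupp.single_apply] <;> omega
                · ext i; fin_cases i <;>
                    simp [Finsupp.add_apply, Finsupp.single_apply]
                · simp [Finsupp.add_apply, Finsupp.tsub_apply, Finsupp.single_apply]
                  omega
              · have c24 : 1 ≤ e 2 ∧ 1 ≤ e 4 := by omega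
                refine reduce e (Finsupp.single 2 1 + Finsupp.single 4 1)
                  (Finsupp.single 1 1 + Finsupp.single 5 1) ?_ pair6 ?_ (ih _ ?_)
                · intro i
                  fin_cases i <;> simp [Finsupp.add_apply, Finsupp.single_apply] <;> omega
                · ext i; fin_cases i <;>
                    simp [Finsupp.add_apply, Finsupp.single_apply]
                · simp [Finsupp.add_apply, Finsupp.tsub_apply, Finsupp.single_apply]
                  omega

noncomputable def psi (p : MvPolynomial (Fin 3) k) : MvPolynomial (Fin 6) k :=
  AddMonoidAlgebra.mapDomain gg p

lemma psi_add (p q : MvPolynomial (Fin 3) k) : psi (p + q) = psi p + psi q :=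
  AddMonoidAlgebra.mapDomain_add _ _ _

lemma psi_monomial (v : Fin 3 →₀ ℕ) (c : k) : psi (monomial v c) = monomial (gg v) c := by
  rw [psi, ← single_eq_monomial, ← single_eq_monomial, AddMonoidAlgebra.mapDomain_single]

lemma theta_zero_mem (G : MvPolynomial (Fin 6) k) (h : theta k G = 0) :
    G ∈ Ideal.span (Set.range (Delta k)) := by
  have main : ∀ p : MvPolynomial (Fin 6) k,
      p - psi (theta k p) ∈ Ideal.span (Set.range (Delta k)) := by
    intro p
    induction p using MvPolynomial.induction_on' with
    | monomial u a =>
      rw [theta_monomial, psi_monomial]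
      have heq : (monomial u a : MvPolynomial (Fin 6) k) - monomial (gg (tt u)) a
          = C a * ((monomial u 1) - monomial (gg (tt u)) 1) := by
        rw [mul_sub, C_mul_monomial, C_mul_monomial, mul_one]
      rw [heq]
      exact Ideal.mul_mem_left _ _ (key _ u le_rfl)
    | add p q hp hq =>
      rw [map_add, psi_add]
      have h3 := Ideal.add_mem _ hp hq
      rw [← add_sub_add_comm] at h3
      exact h3
  have h4 := main G
  rw [h] at h4
  have : psi (0 : MvPolynomial (Fin 3) k) = 0 := AddMonoidAlgebra.mapDomain_zero _
  rw [this, sub_zero] at h4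
  exact h4

/-! ### Even/odd support machinery -/

def degv (v : Fin 3 →₀ ℕ) : ℕ := v 0 + v 1 + v 2

def AllE (p : MvPolynomial (Fin 3) k) : Prop := ∀ v ∈ p.support, Even (degv v)
def AllO (p : MvPolynomial (Fin 3) k) : Prop := ∀ v ∈ p.support, ¬ Even (degv v)

lemma allE_theta (G : MvPolynomial (Fin 6) k) : AllE (theta k G) := by
  induction G using MvPolynomial.induction_on' with
  | monomial u a =>
    rw [theta_monomial]
    intro v hv
    have hv' := support_monomial_subset hv
    rw [Finset.mem_singleton] at hv'
    subst hv'
    refine ⟨u 0 + u 1 + u 2 + u 3 + u 4 + u 5, ?_⟩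
    simp [degv]; ring
  | add p q hp hq =>
    intro v hv
    rw [map_add] at hv
    rcases Finset.mem_union.mp (MvPolynomial.support_add hv) with h | h
    · exact hp v h
    · exact hq v h

lemma allE_sum (s : Finset (Fin 3 →₀ ℕ)) (φ : (Fin 3 →₀ ℕ) → k)
    (hs : ∀ v ∈ s, Even (degv v)) :
    AllE (∑ v ∈ s, (monomial v (φ v) : MvPolynomial (Fin 3) k)) := by
  intro w hw
  obtain ⟨v, hv, hw'⟩ := Finset.mem_biUnion.mp (MvPolynomial.support_sum hw)
  have := support_monomial_subset hw'
  rw [Finset.mem_singleton] at this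
  subst this
  exact hs _ hv

lemma allO_sum (s : Finset (Fin 3 →₀ ℕ)) (φ : (Fin 3 →₀ ℕ) → k)
    (hs : ∀ v ∈ s, ¬ Even (degv v)) :
    AllO (∑ v ∈ s, (monomial v (φ v) : MvPolynomial (Fin 3) k)) := by
  intro w hw
  obtain ⟨v, hv, hw'⟩ := Finset.mem_biUnion.mp (MvPolynomial.support_sum hw)
  have := support_monomial_subset hw'
  rw [Finset.mem_singleton] at this
  subst this
  exact hs _ hv

lemma degv_add (a b : Fin 3 →₀ ℕ) : degv (a + b) = degv a + degv b := by
  simp [degv, Finsupp.add_apply]; ring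

lemma allO_mul_allE (p q : MvPolynomial (Fin 3) k) (hp : AllO p) (hq : AllE q) :
    AllO (p * q) := by
  intro v hv
  obtain ⟨a, ha, b, hb, rfl⟩ := Finset.mem_add.mp (support_mul p q hv)
  have h1 := hp a ha
  have h2 := hq b hb
  rw [degv_add]
  simp only [Nat.even_iff] at h1 h2 ⊢
  omega

lemma allO_mul_allO (p q : MvPolynomial (Fin 3) k) (hp : AllO p) (hq : AllO q) :
    AllE (p * q) := by
  intro v hv
  obtain ⟨a, ha, b, hb, rfl⟩ := Finset.mem_add.mp (support_mul p q hv)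
  have h1 := hp a ha
  have h2 := hq b hb
  rw [degv_add]
  simp only [Nat.even_iff] at h1 h2 ⊢
  omega

lemma allE_sub (p q : MvPolynomial (Fin 3) k) (hp : AllE p) (hq : AllE q) :
    AllE (p - q) := by
  intro v hv
  rcases Finset.mem_union.mp (support_sub _ p q hv) with h | h
  · exact hp v h
  · exact hq v h

lemma eq_zero_of_allE_allO (p : MvPolynomial (Fin 3) k) (hE : AllE p) (hO : AllO p) :
    p = 0 := by
  rw [← MvPolynomial.support_eq_empty, Finset.eq_empty_iff_forall_notMem]
  exact fun v hv => hO v hv (hE v hv)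

lemma exists_theta_preimage (p : MvPolynomial (Fin 3) k) (hp : AllE p) :
    ∃ H : MvPolynomial (Fin 6) k, theta k H = p := by
  refine ⟨∑ v ∈ p.support, monomial (gg v) (coeff v p), ?_⟩
  rw [map_sum]
  rw [Finset.sum_congr rfl (fun v hv => by
    rw [theta_monomial, tt_gg v (hp v hv)])]
  exact support_sum_monomial_coeff p

def idxv (v : Fin 3 →₀ ℕ) : Fin 3 :=
  if v 0 % 2 = 1 then 0 else if v 1 % 2 = 1 then 1 else 2

noncomputable def hpart (po : MvPolynomial (Fin 3) k) (n : Fin 3) :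
    MvPolynomial (Fin 3) k :=
  ∑ v ∈ po.support.filter (fun v => idxv v = n),
    monomial (v - Finsupp.single n 1) (coeff v po)

end VAux

open VAux

/-- For an irreducible plane curve of odd degree `d`, the homogeneous ideal of its Veronese
image is generated by the six minors together with three forms `F₀,F₁,F₂` of degree `(d+1)/2`
with `θ(Fₙ) = xₙ·f`. -/
theorem ideal_of_odd_degree_curve (k : Type*) [Field k] [IsAlgClosed k]
    (f : MvPolynomial (Fin 3) k) (d : ℕ) (hd : Odd d) (hfirr : Irreducible f)
    (hf : f.IsHomogeneous d)
    (F : Fin 3 → MvPolynomial (Fin 6) k)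
    (hF : ∀ n, (F n).IsHomogeneous ((d + 1) / 2))
    (hθF : ∀ n, theta k (F n) = X n * f)
    (G : MvPolynomial (Fin 6) k) (n' : ℕ) (hG : G.IsHomogeneous n')
    (hθG : theta k G ∈ Ideal.span {f}) :
    G ∈ Ideal.span (Set.range F ∪ Set.range (Delta k)) := by
  classical
  -- f has all monomials of odd degree d
  have hfodd : AllO f := by
    intro v hv
    have hvd : v 0 + v 1 + v 2 = d := by
      have := hf (MvPolynomial.mem_support_iff.mp hv)
      simp [Finsupp.weight, Finsupp.linearCombination, Finsupp.sum_fintype] at this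
      rw [← this, Fin.sum_univ_three]
    have hd' := Nat.odd_iff.mp hd
    rw [degv, hvd, Nat.even_iff]
    omega
  -- θ G = f * c
  obtain ⟨c, hc⟩ := Ideal.mem_span_singleton.mp hθG
  -- split c into even and odd part
  set pe : MvPolynomial (Fin 3) k :=
    ∑ v ∈ c.support.filter (fun v => Even (degv v)), monomial v (coeff v c) with hpe_def
  set po : MvPolynomial (Fin 3) k :=
    ∑ v ∈ c.support.filter (fun v => ¬ Even (degv v)), monomial v (coeff v c) with hpo_def
  have hsplit : pe + po = c := by
    rw [hpe_def, hpo_def, Finset.sum_filter_add_sum_filter_not]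
    exact support_sum_monomial_coeff c
  have hpeE : AllE pe := allE_sum _ _ (fun v hv => (Finset.mem_filter.mp hv).2)
  have hpoO : AllO po := allO_sum _ _ (fun v hv => (Finset.mem_filter.mp hv).2)
  -- θ G = f * po
  have hfpe : f * pe = 0 := by
    have h1 : AllO (f * pe) := by
      have := allO_mul_allE f pe hfodd hpeE
      exact this
    have h2 : AllE (f * po) := allO_mul_allO f po hfodd hpoO
    have h3 : f * pe = theta k G - f * po := by
      rw [hc, ← hsplit]; ring
    have h4 : AllE (f * pe) := h3 ▸ allE_sub _ _ (allE_theta G) h2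
    exact eq_zero_of_allE_allO _ h4 h1
  have hθG' : theta k G = f * po := by
    rw [hc, ← hsplit, mul_add, hfpe, zero_add]
  -- split po into X n · (even part)
  have hodd_idx : ∀ v ∈ po.support, 1 ≤ v (idxv v) ∧ v (idxv v) % 2 = 1 := by
    intro v hv
    have hO := hpoO v hv
    rw [degv, Nat.even_iff] at hO
    rw [idxv]
    split_ifs with h1 h2 <;> constructor <;> omega
  have hXh : ∀ n, X n * hpart po n =
      ∑ v ∈ po.support.filter (fun v => idxv v = n), monomial v (coeff v po) := by
    intro n
    rw [hpart, Finset.mul_sum]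
    refine Finset.sum_congr rfl (fun v hv => ?_)
    obtain ⟨hvs, hvn⟩ := Finset.mem_filter.mp hv
    have h1 := (hodd_idx v hvs).1
    rw [hvn] at h1
    rw [X, monomial_mul, one_mul,
      add_tsub_cancel_of_le (Finsupp.single_le_iff.mpr h1)]
  have hsum : ∑ n : Fin 3, X n * hpart po n = po := by
    rw [Finset.sum_congr rfl (fun n _ => hXh n)]
    rw [Finset.sum_fiberwise_of_maps_to (fun v _ => Finset.mem_univ (idxv v))]
    exact support_sum_monomial_coeff po
  have hEh : ∀ n, AllE (hpart po n) := by
    intro n w hw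
    rw [hpart] at hw
    obtain ⟨v, hv, hw'⟩ := Finset.mem_biUnion.mp (MvPolynomial.support_sum hw)
    have hws := support_monomial_subset hw'
    rw [Finset.mem_singleton] at hws
    subst hws
    obtain ⟨hvs, hvn⟩ := Finset.mem_filter.mp hv
    have h1 := hodd_idx v hvs
    rw [hvn] at h1
    have hO := hpoO v hvs
    rw [degv, Nat.even_iff] at hO
    rw [degv, Nat.even_iff]
    fin_cases n <;>
      simp [Finsupp.tsub_apply, Finsupp.single_apply] at h1 ⊢ <;> omega
  -- preimages
  choose H hH using fun n => exists_theta_preimage (hpart po n) (hEh n)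
  -- the kernel element
  have hker : theta k (G - ∑ n : Fin 3, H n * F n) = 0 := by
    rw [map_sub, map_sum]
    have : ∀ n ∈ Finset.univ, theta k (H n * F n) = hpart po n * (X n * f) := by
      intro n _
      rw [map_mul, hH, hθF]
    rw [Finset.sum_congr rfl this, hθG']
    have : ∑ n : Fin 3, hpart po n * (X n * f) = f * ∑ n : Fin 3, X n * hpart po n := by
      rw [Finset.mul_sum]
      exact Finset.sum_congr rfl (fun n _ => by ring)
    rw [this, hsum, sub_self]
  have hmem1 : G - ∑ n : Fin 3, H n * F n ∈ Ideal.span (Set.range (Delta k)) :=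
    theta_zero_mem _ hker
  have hfinal : G = (G - ∑ n : Fin 3, H n * F n) + ∑ n : Fin 3, H n * F n := by ring
  rw [hfinal]
  refine Ideal.add_mem _ ?_ ?_
  · exact Ideal.span_mono Set.subset_union_right hmem1
  · refine Ideal.sum_mem _ (fun n _ => ?_)
    exact Ideal.mul_mem_left _ _
      (Ideal.subset_span (Set.mem_union_left _ (Set.mem_range_self n)))
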